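/- Fix an integer n ≥ 1, α ∈ (0, 1], and x₁, …, x_n ∈ [0,1] with empirical mean μ̂ := (1/n)·Σ_{t=1}^n x_t. Suppose W : [0,1] → [0, ∞] satisfies log W(s) ≥ sup_{λ ∈ [−1/(1−s), 1/s]} Σ_{t=1}^n (λ(x_t − s) − (λ²/2)(x_t − s)²) − 2·log n for every s ∈ [0,1]. Then the set C := {s ∈ [0,1] : W(s) < 1/α} has diameter at most 4·√(log(n/α)/n). -/

import Mathlib

open Set
open scoped ENNReal
set_option maxHeartbeats 2000000

/-- **width of the betting confidence set.**
Fix `n ≥ 1`, `α ∈ (0,1]`, and `x₁,…,x_n ∈ [0,1]` with empirical mean `μ̂`. Suppose the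
wealth `W : [0,1] → [0,∞]` satisfies, for every `s ∈ [0,1]`,
`log W(s) ≥ sup_{λ ∈ [-1/(1-s), 1/s]} Σ_t (λ(x_t - s) - (λ²/2)(x_t - s)²) - 2 log n`
(the condition `λ ∈ [-1/(1-s), 1/s]` is expressed as `-1 ≤ λ(1-s)` and `λ·s ≤ 1`, which
handles the endpoint cases `s ∈ {0,1}` correctly).
Then the set `C = {s ∈ [0,1] : W(s) < 1/α}` has diameter at most `4·√(log(n/α)/n)`. -/
theorem stmt7_betting_CS_width
    (n : ℕ) (hn : 1 ≤ n) (α : ℝ) (hα : α ∈ Set.Ioc (0 : ℝ) 1)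
    (x : ℕ → ℝ) (hx : ∀ t ∈ Finset.range n, x t ∈ Set.Icc (0 : ℝ) 1)
    (W : ℝ → ℝ≥0∞)
    (hW : ∀ s ∈ Set.Icc (0 : ℝ) 1, ∀ lam : ℝ,
      (-1 : ℝ) ≤ lam * (1 - s) → lam * s ≤ 1 →
      ENNReal.ofReal (Real.exp
        ((∑ t ∈ Finset.range n, (lam * (x t - s) - lam ^ 2 / 2 * (x t - s) ^ 2))
          - 2 * Real.log n)) ≤ W s) :
    Metric.diam {s ∈ Set.Icc (0 : ℝ) 1 | W s < ENNReal.ofReal (1 / α)} ≤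
      4 * Real.sqrt (Real.log (n / α) / n) := by
  have hn1 : (1:ℝ) ≤ n := by exact_mod_cast hn
  have hn0 : (0:ℝ) < n := by linarith
  obtain ⟨hα0, hα1⟩ := hα
  have hinvα : (0:ℝ) < 1 / α := by positivity
  have hlogα : Real.log α ≤ 0 := Real.log_nonpos hα0.le hα1
  have hlogn : 0 ≤ Real.log n := Real.log_nonneg hn1
  set L := Real.log ((n:ℝ) / α) with hLdef
  set R := Real.sqrt (L / n) with hRdef
  have hLeq : L = Real.log n - Real.log α := Real.log_div (ne_of_gt hn0) (ne_of_gt hα0)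
  have hL0 : 0 ≤ L := by rw [hLeq]; linarith
  have hR0 : 0 ≤ R := Real.sqrt_nonneg _
  by_cases hcase : 1 ≤ 4 * R
  · calc Metric.diam {s ∈ Set.Icc (0:ℝ) 1 | W s < ENNReal.ofReal (1/α)}
        ≤ Metric.diam (Set.Icc (0:ℝ) 1) :=
          Metric.diam_mono (fun s hs => hs.1) (Metric.isBounded_Icc 0 1)
      _ = 1 := by rw [Real.diam_Icc (by norm_num : (0:ℝ) ≤ 1)]; norm_num
      _ ≤ 4 * R := hcase
  · push_neg at hcase
    have key : ∀ s ∈ {s ∈ Set.Icc (0:ℝ) 1 | W s < ENNReal.ofReal (1/α)},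
        |(∑ t ∈ Finset.range n, x t) / n - s| ≤ 2 * R := by
      rintro s ⟨hs01, hWs⟩
      obtain ⟨hs0, hs1⟩ := hs01
      have main : ∀ lam : ℝ, (-1:ℝ) ≤ lam * (1 - s) → lam * s ≤ 1 →
          (∑ t ∈ Finset.range n, (lam * (x t - s) - lam ^ 2 / 2 * (x t - s) ^ 2))
            - 2 * Real.log n < - Real.log α := by
        intro lam h1 h2
        have h3 := lt_of_le_of_lt (hW s ⟨hs0, hs1⟩ lam h1 h2) hWs
        rw [ENNReal.ofReal_lt_ofReal_iff hinvα] at h3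
        have h4 := Real.log_lt_log (Real.exp_pos _) h3
        rwa [Real.log_exp, one_div, Real.log_inv] at h4
      by_contra hcon
      push_neg at hcon
      set d := (∑ t ∈ Finset.range n, x t) / n - s with hd
      rcases lt_or_ge 0 L with hLpos | hLle
      · -- main case
        have hRpos : 0 < R := Real.sqrt_pos.mpr (by positivity)
        have hRsq : R ^ 2 = L / n := Real.sq_sqrt (by positivity)
        set lam : ℝ := if 0 ≤ d then 2 * R else -(2 * R) with hlam
        have habs : |lam| = 2 * R := by
          rw [hlam]; split <;> simp [abs_of_nonneg, abs_of_nonpos, hR0] <;> linarith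
        have habs1 : |lam| ≤ 1 := by rw [habs]; linarith
        have hlam_le := (abs_le.mp habs1).2
        have hlam_ge := (abs_le.mp habs1).1
        have h1 : (-1:ℝ) ≤ lam * (1 - s) := by nlinarith
        have h2 : lam * s ≤ 1 := by nlinarith
        have hmain := main lam h1 h2
        -- lower bound the sum
        have hterm : ∀ t ∈ Finset.range n,
            lam * (x t - s) - lam ^ 2 / 2 ≤
              lam * (x t - s) - lam ^ 2 / 2 * (x t - s) ^ 2 := by
          intro t ht
          obtain ⟨hx0, hx1⟩ := hx t ht
          have hsq : (x t - s) ^ 2 ≤ 1 := by nlinarith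
          nlinarith [sq_nonneg lam]
        have hsum := Finset.sum_le_sum hterm
        have hsum_eq : (∑ t ∈ Finset.range n, (lam * (x t - s) - lam ^ 2 / 2))
            = lam * (n * d) - n * (lam ^ 2 / 2) := by
          rw [Finset.sum_sub_distrib, ← Finset.mul_sum, Finset.sum_sub_distrib,
            Finset.sum_const, Finset.card_range, Finset.sum_const, Finset.card_range]
          have : (∑ t ∈ Finset.range n, x t) = n * d + n * s := by
            rw [hd]; field_simp; ring
          rw [this]; ring
        rw [hsum_eq] at hsum
        have hlamd : lam * d = 2 * R * |d| := by
          rw [hlam]; split_ifs with h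
          · rw [abs_of_nonneg h]
          · rw [abs_of_neg (lt_of_not_ge h)]; ring
        have hlamsq : lam ^ 2 = 4 * (L / n) := by
          have : lam ^ 2 = (2 * R) ^ 2 := by rw [hlam]; split <;> ring
          rw [this]; rw [mul_pow]; rw [hRsq]; ring
        -- numeric contradiction
        have hlow : 2 * L < lam * (n * d) - n * (lam ^ 2 / 2) := by
          have h5 : lam * (n * d) = n * (2 * R * |d|) := by rw [mul_left_comm, hlamd]
          have h6 : n * (lam ^ 2 / 2) = 2 * L := by
            rw [hlamsq]; field_simp; ring
          rw [h5, h6]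
          have : 2 * R * (2 * R) < 2 * R * |d| := by
            apply mul_lt_mul_of_pos_left hcon (by linarith)
          nlinarith
        have hfin : lam * (↑n * d) - ↑n * (lam ^ 2 / 2) - 2 * Real.log n < - Real.log α := by
          linarith
        linarith
      · -- L ≤ 0 : use lam = 0
        have h0 := main 0 (by norm_num) (by norm_num)
        have hz : (∑ t ∈ Finset.range n, ((0:ℝ) * (x t - s) - 0 ^ 2 / 2 * (x t - s) ^ 2)) = 0 := by
          simp
        rw [hz] at h0
        have hLle2 : Real.log n ≤ Real.log α := by
          rw [hLeq] at hLle; linarith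
        linarith
    apply Metric.diam_le_of_forall_dist_le (by positivity)
    intro a ha b hb
    have h1 := key a ha
    have h2 := key b hb
    rw [Real.dist_eq]
    have h3 : a - b = ((∑ t ∈ Finset.range n, x t) / n - b) - ((∑ t ∈ Finset.range n, x t) / n - a) := by
      ring
    rw [h3]
    calc |((∑ t ∈ Finset.range n, x t) / n - b) - ((∑ t ∈ Finset.range n, x t) / n - a)|
        ≤ |(∑ t ∈ Finset.range n, x t) / n - b| + |(∑ t ∈ Finset.range n, x t) / n - a| :=
          abs_sub _ _
      _ ≤ 4 * R := by linarith
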